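/- Conversely, if b ∈ B is transcendental over a subgroup A ≤ B, then the conjugates A^{b^i}, i ∈ ℤ, generate their free product in B. -/

import Mathlib

open Monoid

section Aux

variable {B : Type*} [Group B]

private def shiftE (A : Subgroup B) (n : ℤ) :
    CoprodI (fun _ : ℤ => A) ≃* CoprodI (fun _ : ℤ => A) :=
  MonoidHom.toMulEquiv
    (CoprodI.lift fun i => CoprodI.of (M := fun _ : ℤ => A) (i := i - n))
    (CoprodI.lift fun i => CoprodI.of (M := fun _ : ℤ => A) (i := i + n))
    (CoprodI.ext_hom _ _ fun i => by ext a; simp)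
    (CoprodI.ext_hom _ _ fun i => by ext a; simp)

@[simp] private lemma shiftE_of (A : Subgroup B) (n i : ℤ) (a : A) :
    shiftE A n (CoprodI.of (M := fun _ : ℤ => A) (i := i) a)
      = CoprodI.of (M := fun _ : ℤ => A) (i := i - n) a := by
  simp [shiftE, MonoidHom.toMulEquiv]

private def shiftHom (A : Subgroup B) :
    Multiplicative ℤ →* MulAut (CoprodI (fun _ : ℤ => A)) :=
  MonoidHom.mk' (fun n => shiftE A n.toAdd) (by
    intro m n
    apply MulEquiv.toMonoidHom_injective
    apply CoprodI.ext_hom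
    intro i
    ext a
    simp [sub_sub, add_comm])

end Aux

theorem free_position_of_transcendental
    {B : Type*} [Group B] (A : Subgroup B) (b : B)
    (htr : Function.Injective
      (Monoid.Coprod.lift A.subtype (zpowersHom B b) :
        Monoid.Coprod A (Multiplicative ℤ) →* B)) :
    Function.Injective
      (Monoid.CoprodI.lift
        (fun i : ℤ =>
          (MulAut.conj (b ^ (-i))).toMonoidHom.comp A.subtype :
          ∀ i : ℤ, (fun _ : ℤ => A) i →* B)) := by
  set G := CoprodI (fun _ : ℤ => A)
  -- the embedding of the free product into A * ℤ
  set φ : G →* Coprod A (Multiplicative ℤ) :=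
    CoprodI.lift (fun i =>
      (MulAut.conj (Coprod.inr (Multiplicative.ofAdd (-i)) :
        Coprod A (Multiplicative ℤ))).toMonoidHom.comp Coprod.inl) with hφ
  -- retraction into the semidirect product
  set ψ : Coprod A (Multiplicative ℤ) →* G ⋊[shiftHom A] Multiplicative ℤ :=
    Coprod.lift (SemidirectProduct.inl.comp
      (CoprodI.of (M := fun _ : ℤ => A) (i := (0 : ℤ)))) SemidirectProduct.inr with hψ
  have hψφ : ψ.comp φ = SemidirectProduct.inl := by
    refine CoprodI.ext_hom _ _ fun i => MonoidHom.ext fun a => ?_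
    simp only [MonoidHom.comp_apply, hφ, hψ, CoprodI.lift_of, MulEquiv.coe_toMonoidHom,
      MulAut.conj_apply, map_mul, map_inv, Coprod.lift_apply_inl, Coprod.lift_apply_inr,
      MonoidHom.comp_apply]
    rw [← map_inv, ← SemidirectProduct.inl_aut]
    simp only [shiftHom, MonoidHom.mk'_apply, toAdd_ofAdd]
    rw [shiftE_of, zero_sub, neg_neg]
  have hφinj : Function.Injective φ := by
    have := SemidirectProduct.inl_injective (φ := shiftHom A) (N := G)
    rw [← hψφ] at this
    exact Function.Injective.of_comp this
  have hkey : (Monoid.CoprodI.lift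
        (fun i : ℤ =>
          (MulAut.conj (b ^ (-i))).toMonoidHom.comp A.subtype :
          ∀ i : ℤ, (fun _ : ℤ => A) i →* B))
      = (Coprod.lift A.subtype (zpowersHom B b)).comp φ := by
    refine CoprodI.ext_hom _ _ fun i => MonoidHom.ext fun a => ?_
    simp [hφ, MulAut.conj_apply]
    have h1 : (MulAut.conj b ^ i)⁻¹ = MulAut.conj ((b ^ i)⁻¹) := by
      rw [← map_zpow, ← map_inv]
    rw [show MulEquiv.symm (MulAut.conj b ^ i) = (MulAut.conj b ^ i)⁻¹ from rfl, h1, MulAut.conj_apply, inv_inv]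
  rw [hkey]
  exact htr.comp hφinj
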